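/- Let X and Y be Banach spaces. Then every integral projective norm-attaining tensor can be approximated in the projective norm by finitely norm-attaining tensors; that is, INA_π(X⊗̂_πY) ⊆ closure of FNA_π(X⊗̂_πY) in X⊗̂_πY. -/

import Mathlib

open MeasureTheory Metric Set Filter TopologicalSpace

noncomputable section

variable {𝕜 : Type*} [RCLike 𝕜]
variable {X : Type*} [NormedAddCommGroup X] [NormedSpace 𝕜 X]
variable {Y : Type*} [NormedAddCommGroup Y] [NormedSpace 𝕜 Y]
variable {T : Type*} [NormedAddCommGroup T] [NormedSpace 𝕜 T]
variable [NormedSpace ℝ T] [IsScalarTower ℝ 𝕜 T]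

/-- `T`, together with the continuous bilinear map `tmul`, is a realization of the
projective tensor product `X ⊗̂_π Y`: it is complete, the span of elementary tensors
`x ⊗ y = tmul x y` is dense, and on that span the norm is the projective norm. -/
structure IsProjTensor (tmul : X →L[𝕜] Y →L[𝕜] T) : Prop where
  complete : CompleteSpace T
  dense_span :
    Dense ((Submodule.span 𝕜 (Set.range fun p : X × Y => tmul p.1 p.2) : Submodule 𝕜 T) : Set T)
  norm_eq : ∀ z : T,
    z ∈ Submodule.span 𝕜 (Set.range fun p : X × Y => tmul p.1 p.2) →
    ‖z‖ = sInf { c : ℝ | ∃ (m : ℕ) (x : Fin m → X) (y : Fin m → Y),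
      z = ∑ i, tmul (x i) (y i) ∧ c = ∑ i, ‖x i‖ * ‖y i‖ }

/-- `u` attains its projective norm (`u ∈ NA_π(X ⊗̂_π Y)`): it admits a representation
`u = ∑ λ_n x_n ⊗ y_n` with `x_n ∈ B_X`, `y_n ∈ B_Y`, `λ_n ≥ 0` and `∑ λ_n = ‖u‖_π`. -/
def NApi (tmul : X →L[𝕜] Y →L[𝕜] T) (u : T) : Prop :=
  ∃ (x : ℕ → X) (y : ℕ → Y) (l : ℕ → ℝ),
    (∀ n, ‖x n‖ ≤ 1) ∧ (∀ n, ‖y n‖ ≤ 1) ∧ (∀ n, 0 ≤ l n) ∧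
    HasSum (fun n => (l n : 𝕜) • tmul (x n) (y n)) u ∧ HasSum l ‖u‖

/-- `u` is finitely norm-attaining (`u ∈ FNA_π(X ⊗̂_π Y)`): it admits a finite optimal
representation `u = ∑_{k<m} x_k ⊗ y_k` with `∑_{k<m} ‖x_k‖‖y_k‖ = ‖u‖_π`. -/
def FNApi (tmul : X →L[𝕜] Y →L[𝕜] T) (u : T) : Prop :=
  ∃ (m : ℕ) (x : Fin m → X) (y : Fin m → Y),
    u = ∑ i, tmul (x i) (y i) ∧ ∑ i, ‖x i‖ * ‖y i‖ = ‖u‖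

/-- `u` is an integral projective norm-attaining tensor witnessed by `μ`: `μ` is a finite
positive Borel measure concentrated on `B_X × B_Y`, the map `(x, y) ↦ x ⊗ y` is
`μ`-Bochner integrable, `u = ∫ x ⊗ y ∂μ` and `‖μ‖ = ‖u‖_π`. -/
def INApiWitness [MeasurableSpace X] [MeasurableSpace Y]
    (tmul : X →L[𝕜] Y →L[𝕜] T) (u : T) (μ : Measure (X × Y)) : Prop :=
  IsFiniteMeasure μ ∧
  μ ((closedBall (0 : X) 1 ×ˢ closedBall (0 : Y) 1)ᶜ) = 0 ∧
  Integrable (fun p : X × Y => tmul p.1 p.2) μ ∧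
  u = ∫ p, tmul p.1 p.2 ∂μ ∧
  (μ Set.univ).toReal = ‖u‖

/-- `u ∈ INA_π(X ⊗̂_π Y)`: `u` is an integral projective norm-attaining tensor. -/
def INApi [MeasurableSpace X] [MeasurableSpace Y]
    (tmul : X →L[𝕜] Y →L[𝕜] T) (u : T) : Prop :=
  ∃ μ : Measure (X × Y), INApiWitness tmul u μ


lemma IsProjTensor.norm_tmul_le {tmul : X →L[𝕜] Y →L[𝕜] T} (hT : IsProjTensor tmul)
    (x : X) (y : Y) : ‖tmul x y‖ ≤ ‖x‖ * ‖y‖ := by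
  rw [hT.norm_eq _ (Submodule.subset_span ⟨(x, y), rfl⟩)]
  refine csInf_le ⟨0, ?_⟩ ?_
  · rintro c ⟨m, xs, ys, -, rfl⟩
    exact Finset.sum_nonneg fun i _ => mul_nonneg (norm_nonneg _) (norm_nonneg _)
  · exact ⟨1, fun _ => x, fun _ => y, by simp, by simp⟩

lemma real_smul_tmul (tmul : X →L[𝕜] Y →L[𝕜] T) (r : ℝ) (x : X) (y : Y) :
    r • tmul x y = tmul (((r : 𝕜)) • x) y := by
  rw [ContinuousLinearMap.map_smul, ContinuousLinearMap.smul_apply,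
    ← RCLike.real_smul_eq_coe_smul (K := 𝕜)]

/-- Theorem 2.10: every integral projective norm-attaining tensor is a norm limit of
finitely norm-attaining tensors. -/
theorem stmt_6 [CompleteSpace X] [CompleteSpace Y]
    [MeasurableSpace X] [BorelSpace X] [MeasurableSpace Y] [BorelSpace Y]
    (tmul : X →L[𝕜] Y →L[𝕜] T) (hT : IsProjTensor tmul) :
    {u : T | INApi tmul u} ⊆ closure {u : T | FNApi tmul u} := by
  haveI := hT.complete
  intro u hu
  obtain ⟨μ, hfin, hnull, hint, hrep, hnorm⟩ := hu
  haveI := hfin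
  by_cases hu0 : u = 0
  · subst hu0
    exact subset_closure ⟨0, Fin.elim0, Fin.elim0, by simp, by simp⟩
  obtain ⟨f, hf1, hfu⟩ := exists_dual_vector 𝕜 u (norm_ne_zero_iff.mpr hu0)
  set g : T →L[ℝ] ℝ := (RCLike.reCLM).comp (f.restrictScalars ℝ) with hgdef
  have hgle : ∀ t : T, g t ≤ ‖t‖ := by
    intro t
    calc g t ≤ ‖f t‖ := RCLike.re_le_norm _
    _ ≤ ‖f‖ * ‖t‖ := f.le_opNorm t
    _ = ‖t‖ := by rw [hf1, one_mul]
  have hgu : g u = ‖u‖ := by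
    simp only [hgdef, ContinuousLinearMap.coe_comp', Function.comp_apply,
      ContinuousLinearMap.coe_restrictScalars', hfu, RCLike.reCLM_apply, RCLike.ofReal_re]
  set φ : X × Y → T := fun p => tmul p.1 p.2 with hφdef
  have hφle : ∀ p : X × Y, ‖φ p‖ ≤ ‖p.1‖ * ‖p.2‖ := fun p => hT.norm_tmul_le p.1 p.2
  have hball : ∀ᵐ p ∂μ, ‖p.1‖ ≤ 1 ∧ ‖p.2‖ ≤ 1 := by
    rw [MeasureTheory.ae_iff]
    refine measure_mono_null ?_ hnull
    intro p hp
    simp only [Set.mem_compl_iff, Set.mem_prod, mem_closedBall, dist_zero_right]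
    intro h
    exact hp ⟨h.1, h.2⟩
  have hg1 : ∀ᵐ p ∂μ, g (φ p) ≤ 1 := by
    filter_upwards [hball] with p hp
    calc g (φ p) ≤ ‖φ p‖ := hgle _
    _ ≤ ‖p.1‖ * ‖p.2‖ := hφle p
    _ ≤ 1 := mul_le_one₀ hp.1 (norm_nonneg _) hp.2
  have hintg : Integrable (fun p => g (φ p)) μ := g.integrable_comp hint
  have hizero : ∫ p, (1 - g (φ p)) ∂μ = 0 := by
    rw [integral_sub (integrable_const 1) hintg, integral_const,
      ContinuousLinearMap.integral_comp_comm g hint, ← hrep, hgu]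
    simp [measureReal_def, hnorm]
  have haeg : ∀ᵐ p ∂μ, g (φ p) = 1 := by
    have hnn : 0 ≤ᵐ[μ] fun p => 1 - g (φ p) := by
      filter_upwards [hg1] with p hp
      simpa using hp
    have h0 : (fun p => 1 - g (φ p)) =ᵐ[μ] 0 :=
      (MeasureTheory.integral_eq_zero_iff_of_nonneg_ae hnn ((integrable_const 1).sub hintg)).mp
        hizero
    filter_upwards [h0] with p hp
    have h1 : 1 - g (φ p) = 0 := hp
    linarith
  set S : Set (X × Y) := {p | g (φ p) = 1 ∧ ‖p.1‖ ≤ 1 ∧ ‖p.2‖ ≤ 1} with hSdef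
  have haeS : ∀ᵐ p ∂μ, p ∈ S := by
    filter_upwards [haeg, hball] with p h1 h2
    exact ⟨h1, h2.1, h2.2⟩
  set K : Set T := convexHull ℝ (φ '' S) with hKdef
  have hμ0 : μ Set.univ ≠ 0 := by
    intro h
    apply hu0
    rw [← norm_eq_zero, ← hnorm, h]
    simp
  have hμtop : μ Set.univ ≠ ⊤ := measure_ne_top μ _
  set ν : Measure (X × Y) := (μ Set.univ)⁻¹ • μ with hνdef
  haveI : IsProbabilityMeasure ν := by
    constructor
    simp [hνdef, Measure.smul_apply, ENNReal.inv_mul_cancel hμ0 hμtop]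
  have hν_int : Integrable φ ν := hint.smul_measure (ENNReal.inv_ne_top.mpr hμ0)
  have haeSν : ∀ᵐ p ∂ν, p ∈ S := Measure.ae_smul_measure haeS _
  have hw : (∫ p, φ p ∂ν) ∈ closure K := by
    refine Convex.integral_mem ((convex_convexHull ℝ _).closure) isClosed_closure ?_ hν_int
    filter_upwards [haeSν] with p hp
    exact subset_closure (subset_convexHull ℝ _ ⟨p, hp, rfl⟩)
  set a : ℝ := (μ Set.univ).toReal with hadef
  have ha : 0 < a := ENNReal.toReal_pos hμ0 hμtop
  have hu_eq : u = a • (∫ p, φ p ∂ν) := by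
    rw [hνdef, integral_smul_measure, hrep, smul_smul, ENNReal.toReal_inv]
    rw [mul_inv_cancel₀ (ne_of_gt ha), one_smul]
  -- every element of a • K is finitely norm-attaining
  have hsub : (a • ·) '' K ⊆ {v : T | FNApi tmul v} := by
    rintro - ⟨v, hv, rfl⟩
    show FNApi tmul (a • v)
    rw [hKdef, convexHull_eq] at hv
    obtain ⟨ι, t, w, z, hw0, hw1, hzs, hvz⟩ := hv
    choose p hpS hpz using fun (i : {i // i ∈ t}) => hzs i.1 i.2
    rw [← hvz, Finset.centerMass_eq_of_sum_1 _ _ hw1]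
    set e := t.equivFin with hedef
    set c : Fin t.card → ℝ := fun j => a * w (e.symm j).1 with hcdef
    set q : Fin t.card → X × Y := fun j => p (e.symm j) with hqdef
    have hc0 : ∀ j, 0 ≤ c j := fun j =>
      mul_nonneg ha.le (hw0 _ (e.symm j).2)
    refine ⟨t.card, fun j => ((c j : ℝ) : 𝕜) • (q j).1, fun j => (q j).2, ?_, ?_⟩
    · -- representation
      have hterm : ∀ j : Fin t.card, tmul (((c j : ℝ) : 𝕜) • (q j).1) ((q j).2)
          = c j • z (e.symm j).1 := by
        intro j
        rw [← real_smul_tmul]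
        congr 1
        exact hpz (e.symm j)
      rw [Finset.sum_congr rfl fun j _ => hterm j]
      have h1 : ∑ j : Fin t.card, c j • z (e.symm j).1
          = ∑ i : {i // i ∈ t}, (a * w i.1) • z i.1 :=
        Fintype.sum_equiv e.symm _ _ fun j => rfl
      rw [h1, Finset.sum_coe_sort t (fun i => (a * w i) • z i), Finset.smul_sum]
      exact Finset.sum_congr rfl fun i _ => smul_smul a (w i) (z i)
    · -- norm equality
      have hAeq : (∑ j : Fin t.card, tmul (((c j : ℝ) : 𝕜) • (q j).1) ((q j).2))
          = a • ∑ i ∈ t, w i • z i := by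
        have hterm : ∀ j : Fin t.card, tmul (((c j : ℝ) : 𝕜) • (q j).1) ((q j).2)
            = c j • z (e.symm j).1 := by
          intro j
          rw [← real_smul_tmul]
          congr 1
          exact hpz (e.symm j)
        rw [Finset.sum_congr rfl fun j _ => hterm j]
        have h1 : ∑ j : Fin t.card, c j • z (e.symm j).1
            = ∑ i : {i // i ∈ t}, (a * w i.1) • z i.1 :=
          Fintype.sum_equiv e.symm _ _ fun j => rfl
        rw [h1, Finset.sum_coe_sort t (fun i => (a * w i) • z i), Finset.smul_sum]
        exact Finset.sum_congr rfl fun i _ => (smul_smul a (w i) (z i)).symm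
      have hxynorm : ∀ j : Fin t.card,
          ‖((c j : ℝ) : 𝕜) • (q j).1‖ * ‖(q j).2‖ = c j * (‖(q j).1‖ * ‖(q j).2‖) := by
        intro j
        rw [norm_smul, RCLike.norm_ofReal, abs_of_nonneg (hc0 j), mul_assoc]
      rw [Finset.sum_congr rfl fun j _ => hxynorm j]
      have hgA : g (a • ∑ i ∈ t, w i • z i) = ∑ j : Fin t.card, c j := by
        rw [← hAeq, map_sum]
        refine Finset.sum_congr rfl fun j _ => ?_
        have hz : z (e.symm j).1 = φ (q j) := (hpz (e.symm j)).symm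
        have hterm : tmul (((c j : ℝ) : 𝕜) • (q j).1) ((q j).2) = c j • φ (q j) := by
          rw [← real_smul_tmul]
        rw [hterm, g.map_smul, smul_eq_mul, (hpS (e.symm j)).1, mul_one]
      have hle1 : ‖a • ∑ i ∈ t, w i • z i‖ ≤ ∑ j : Fin t.card, c j * (‖(q j).1‖ * ‖(q j).2‖) := by
        rw [← hAeq]
        refine (norm_sum_le _ _).trans (Finset.sum_le_sum fun j _ => ?_)
        calc ‖tmul (((c j : ℝ) : 𝕜) • (q j).1) ((q j).2)‖
            ≤ ‖((c j : ℝ) : 𝕜) • (q j).1‖ * ‖(q j).2‖ := hT.norm_tmul_le _ _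
        _ = c j * (‖(q j).1‖ * ‖(q j).2‖) := hxynorm j
      have hle2 : ∑ j : Fin t.card, c j * (‖(q j).1‖ * ‖(q j).2‖) ≤ ∑ j : Fin t.card, c j := by
        refine Finset.sum_le_sum fun j _ => ?_
        have hq1 : ‖(q j).1‖ ≤ 1 := (hpS (e.symm j)).2.1
        have hq2 : ‖(q j).2‖ ≤ 1 := (hpS (e.symm j)).2.2
        have hprod : ‖(q j).1‖ * ‖(q j).2‖ ≤ 1 := mul_le_one₀ hq1 (norm_nonneg _) hq2
        calc c j * (‖(q j).1‖ * ‖(q j).2‖) ≤ c j * 1 :=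
              mul_le_mul_of_nonneg_left hprod (hc0 j)
        _ = c j := mul_one _
      have hge : ∑ j : Fin t.card, c j ≤ ‖a • ∑ i ∈ t, w i • z i‖ := by
        rw [← hgA]
        exact hgle _
      linarith
  have humem : u ∈ closure ((a • ·) '' K) := by
    rw [hu_eq]
    exact image_closure_subset_closure_image (continuous_const_smul a)
      (Set.mem_image_of_mem _ hw)
  exact closure_mono hsub humem
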